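/- There exists an absolute constant c > 0 with the following property. Let b ≥ 2 be an integer and A ⊆ [0,1) a set satisfying T_b(A ∩ ℚ) ⊆ A which is not dense in [0,1], and let ε = sup{dist(x, A) : x ∈ [0,1)}. Then for any rational number a/d ∈ A with d ≥ 2 and gcd(ab, d) = 1, one has log(2εd) ≤ c · (P(d)² / log P(d)) · log b. -/

import Mathlib

/-- The map `T_b : x ↦ bx (mod 1)`, i.e. the fractional part of `bx`. -/
noncomputable def Tb (b : ℕ) (x : ℝ) : ℝ := Int.fract ((b : ℝ) * x)

/-- `Pd d` is the largest prime divisor of `d`. -/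
def Pd (d : ℕ) : ℕ := d.primeFactors.sup id


lemma modeq_one_pos {n u : ℕ} (hn : 2 ≤ n) (hu : u ≡ 1 [MOD n]) : 1 ≤ u := by
  rcases Nat.eq_zero_or_pos u with h0 | h0
  · exfalso
    have h1 : (1:ℕ) ≡ 0 [MOD n] := (h0 ▸ hu).symm
    have h2 : n ∣ 1 := (Nat.modEq_zero_iff_dvd).1 h1
    have := Nat.le_of_dvd one_pos h2
    omega
  · exact h0

lemma keyP {p : ℕ} (hp : p.Prime) {y : ℕ} (hy : 2 ≤ y) {w : ℕ} (hw : 1 ≤ w)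
    (hval : ∀ k : ℕ, k ≠ 0 → padicValNat p (y ^ k - 1) = w + padicValNat p k)
    (e : ℕ) {z : ℕ} (hz : z ≡ 1 [MOD p ^ min w e]) :
    ∃ k : ℕ, y ^ k ≡ z [MOD p ^ e] := by
  haveI : Fact p.Prime := ⟨hp⟩
  have hp2 : 2 ≤ p := hp.two_le
  rcases le_or_gt e w with h | h
  · exact ⟨0, by simpa [min_eq_right h, pow_zero] using hz.symm⟩
  have hwe : min w e = w := min_eq_left h.le
  rw [hwe] at hz
  set T := p ^ (e - w) with hT
  have hT1 : 0 < T := Nat.pow_pos (by omega)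
  have hpe1 : 0 < p ^ e := Nat.pow_pos (by omega)
  have hpw2 : 2 ≤ p ^ w := by
    calc 2 = 2 ^ 1 := rfl
    _ ≤ p ^ w := (Nat.pow_le_pow_left hp2 1).trans (Nat.pow_le_pow_right (by omega) hw)
  have hTw : T * p ^ w = p ^ e := by
    rw [hT, ← pow_add]; congr 1; omega
  have hval1 : padicValNat p (y - 1) = w := by
    have := hval 1 one_ne_zero
    simpa using this
  have hypw : p ^ w ∣ y - 1 := by
    rw [← hval1]; exact pow_padicValNat_dvd
  have hy1 : (1 : ℕ) ≡ y [MOD p ^ w] := (Nat.modEq_iff_dvd' (by omega)).2 hypw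
  have hyk1 : ∀ k : ℕ, y ^ k ≡ 1 [MOD p ^ w] := fun k => by
    simpa using (hy1.pow k).symm
  have hpy : Nat.Coprime p y := by
    rw [hp.coprime_iff_not_dvd]
    intro hdvd
    have h1 : p ∣ y - 1 := dvd_trans (dvd_pow_self p (by omega)) hypw
    have h2 : p ∣ 1 := by
      have h3 := Nat.dvd_sub hdvd h1
      have hyy : y - (y - 1) = 1 := by omega
      rwa [hyy] at h3
    have := Nat.le_of_dvd one_pos h2
    omega
  have hexact : ∀ k : ℕ, 0 < k → k < T → ¬ (y ^ k ≡ 1 [MOD p ^ e]) := by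
    intro k hk0 hkT hmod
    have h1y : 1 ≤ y ^ k := Nat.one_le_pow _ _ (by omega)
    have hdvd : p ^ e ∣ y ^ k - 1 := (Nat.modEq_iff_dvd' h1y).1 hmod.symm
    have hne : y ^ k - 1 ≠ 0 := by
      have : 2 ≤ y ^ k := le_trans hy (Nat.le_self_pow (by omega) y)
      omega
    have hle : e ≤ padicValNat p (y ^ k - 1) := by
      rcases (padicValNat_dvd_iff e (y ^ k - 1)).1 hdvd with h' | h'
      · exact absurd h' hne
      · exact h'
    rw [hval k (by omega)] at hle
    have hvk : padicValNat p k < e - w := by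
      by_contra hcon
      push_neg at hcon
      have h4 : p ^ (e - w) ≤ p ^ padicValNat p k := Nat.pow_le_pow_right (by omega) hcon
      have h5 : p ^ (e - w) ≤ k := le_trans h4 (Nat.le_of_dvd hk0 pow_padicValNat_dvd)
      omega
    omega
  set S1 : Finset ℕ := (Finset.range T).image (fun k => y ^ k % p ^ e) with hS1
  set S2 : Finset ℕ := (Finset.range T).image (fun n => 1 + n * p ^ w) with hS2
  have hmem2 : ∀ u : ℕ, 1 ≤ u → u < p ^ e → u ≡ 1 [MOD p ^ w] → u ∈ S2 := by
    intro u hu1 hue humod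
    have hdv : p ^ w ∣ u - 1 := (Nat.modEq_iff_dvd' hu1).1 humod.symm
    obtain ⟨n, hn⟩ := hdv
    have hn' : u = 1 + n * p ^ w := by rw [mul_comm] at hn; omega
    refine Finset.mem_image.2 ⟨n, Finset.mem_range.2 ?_, hn'.symm⟩
    by_contra hcon
    push_neg at hcon
    have h5 : T * p ^ w ≤ n * p ^ w := Nat.mul_le_mul_right _ hcon
    rw [hTw] at h5
    omega
  have hsub : S1 ⊆ S2 := by
    intro u hu
    obtain ⟨k, _, hk⟩ := Finset.mem_image.1 hu
    have hue : u < p ^ e := hk ▸ Nat.mod_lt _ hpe1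
    have h2 : y ^ k ≡ u [MOD p ^ e] := by
      unfold Nat.ModEq; rw [hk, Nat.mod_eq_of_lt hue]
    have h1 : u ≡ 1 [MOD p ^ w] :=
      ((h2.of_dvd (pow_dvd_pow p h.le)).symm.trans (hyk1 k))
    exact hmem2 u (modeq_one_pos hpw2 h1) hue h1
  have hcard2 : S2.card = T := by
    rw [hS2, Finset.card_image_of_injOn, Finset.card_range]
    intro i _ j _ hij
    have hij' : 1 + i * p ^ w = 1 + j * p ^ w := hij
    have h6 : i * p ^ w = j * p ^ w := by omega
    exact Nat.eq_of_mul_eq_mul_right (by omega) h6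
  have hcard1 : S1.card = T := by
    rw [hS1, Finset.card_image_of_injOn, Finset.card_range]
    intro i hi j hj hij
    simp only [Finset.coe_range, Set.mem_Iio] at hi hj
    have hij' : y ^ i % p ^ e = y ^ j % p ^ e := hij
    by_contra hne
    rcases Nat.lt_or_ge i j with hlt | hge
    · have hme : y ^ i ≡ y ^ j [MOD p ^ e] := hij'
      have hsplit : y ^ j = y ^ i * y ^ (j - i) := by rw [← pow_add]; congr 1; omega
      have h1 : y ^ i * 1 ≡ y ^ i * y ^ (j - i) [MOD p ^ e] := by
        rw [mul_one, ← hsplit]; exact hme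
      have hcop : Nat.Coprime (p ^ e) (y ^ i) := hpy.pow _ _
      have h2 : (1 : ℕ) ≡ y ^ (j - i) [MOD p ^ e] :=
        Nat.ModEq.cancel_left_of_coprime hcop h1
      exact hexact (j - i) (by omega) (by omega) h2.symm
    · have hlt : j < i := by omega
      have hme : y ^ j ≡ y ^ i [MOD p ^ e] := hij'.symm
      have hsplit : y ^ i = y ^ j * y ^ (i - j) := by rw [← pow_add]; congr 1; omega
      have h1 : y ^ j * 1 ≡ y ^ j * y ^ (i - j) [MOD p ^ e] := by
        rw [mul_one, ← hsplit]; exact hme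
      have hcop : Nat.Coprime (p ^ e) (y ^ j) := hpy.pow _ _
      have h2 : (1 : ℕ) ≡ y ^ (i - j) [MOD p ^ e] :=
        Nat.ModEq.cancel_left_of_coprime hcop h1
      exact hexact (i - j) (by omega) (by omega) h2.symm
  have hSeq : S1 = S2 := Finset.eq_of_subset_of_card_le hsub (by omega)
  have hu1 : z % p ^ e ≡ 1 [MOD p ^ w] :=
    ((Nat.mod_modEq z (p ^ e)).of_dvd (pow_dvd_pow p h.le)).trans hz
  have hmem : z % p ^ e ∈ S1 :=
    hSeq ▸ hmem2 _ (modeq_one_pos hpw2 hu1) (Nat.mod_lt _ hpe1) hu1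
  obtain ⟨k, _, hk⟩ := Finset.mem_image.1 hmem
  exact ⟨k, hk⟩


lemma pow_modeq_one_of_dvd {b n t F : ℕ} (h : b ^ t ≡ 1 [MOD n]) (ht : t ∣ F) :
    b ^ F ≡ 1 [MOD n] := by
  obtain ⟨c, rfl⟩ := ht
  rw [pow_mul]
  simpa using h.pow c

lemma prod_modeq_one {s : Finset ℕ} {f : ℕ → ℕ} {n : ℕ} (h : ∀ i ∈ s, f i ≡ 1 [MOD n]) :
    (∏ i ∈ s, f i) ≡ 1 [MOD n] := by
  classical
  induction s using Finset.induction with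
  | empty => simp [Nat.ModEq.refl]
  | @insert a s ha ih =>
    rw [Finset.prod_insert ha]
    have h1 := h a (Finset.mem_insert_self a s)
    have h2 := ih (fun i hi => h i (Finset.mem_insert_of_mem hi))
    simpa using h1.mul h2

lemma prod_factorization_eq {d : ℕ} (hd0 : d ≠ 0) :
    ∏ p ∈ d.primeFactors, p ^ d.factorization p = d := by
  rw [← Nat.support_factorization]
  exact Nat.factorization_prod_pow_eq_self hd0

lemma crt_glue {d x z : ℕ} (hd0 : d ≠ 0)
    (h : ∀ p ∈ d.primeFactors, x ≡ z [MOD p ^ d.factorization p]) : x ≡ z [MOD d] := by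
  rw [Nat.modEq_iff_dvd]
  have hprod := prod_factorization_eq hd0
  have : ((∏ p ∈ d.primeFactors, p ^ d.factorization p : ℕ) : ℤ) ∣ (z : ℤ) - (x : ℤ) := by
    push_cast
    refine Finset.prod_dvd_of_coprime ?_ ?_
    · intro p hp q hq hpq
      simp only [Function.onFun]
      exact IsCoprime.pow (Nat.isCoprime_iff_coprime.2
        ((Nat.coprime_primes (Nat.prime_of_mem_primeFactors hp)
          (Nat.prime_of_mem_primeFactors hq)).2 hpq))
    · intro p hp
      have := (h p hp)
      rw [Nat.modEq_iff_dvd] at this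
      exact_mod_cast this
  rwa [hprod] at this

lemma prod_pow_padic_dvd {s : Finset ℕ} (hs : ∀ p ∈ s, p.Prime) {N : ℕ} (hN : N ≠ 0) :
    (∏ p ∈ s, p ^ padicValNat p N) ∣ N := by
  have : ((∏ p ∈ s, p ^ padicValNat p N : ℕ) : ℤ) ∣ (N : ℤ) := by
    push_cast
    refine Finset.prod_dvd_of_coprime ?_ ?_
    · intro p hp q hq hpq
      simp only [Function.onFun]
      exact IsCoprime.pow (Nat.isCoprime_iff_coprime.2
        ((Nat.coprime_primes (hs p hp) (hs q hq)).2 hpq))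
    · intro p hp
      exact_mod_cast Int.natCast_dvd_natCast.2 (pow_padicValNat_dvd)
  exact_mod_cast this

lemma mainNT {b d : ℕ} (hb : 2 ≤ b) (hd : 2 ≤ d) (hbd : Nat.Coprime b d) :
    ∃ m : ℕ, 0 < m ∧ m ∣ d ∧
      m ≤ b ^ (2 * ∑ p ∈ d.primeFactors, (p - 1)) * ∏ p ∈ d.primeFactors, p ∧
      ∀ z : ℕ, z ≡ 1 [MOD m] → ∃ k : ℕ, b ^ k ≡ z [MOD d] := by
  classical
  have hd0 : d ≠ 0 := by omega
  set pf := d.primeFactors with hpf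
  set e : ℕ → ℕ := fun p => d.factorization p with he_def
  set s : ℕ → ℕ := fun p => ∏ q ∈ pf.erase p, (q ^ e q).totient with hs_def
  set F : ℕ → ℕ := fun p => 2 * (p - 1) * s p with hF_def
  set y : ℕ → ℕ := fun p => b ^ F p with hy_def
  set w : ℕ → ℕ := fun p => padicValNat p (y p - 1) with hw_def
  have hppos : ∀ q ∈ pf, 0 < q ^ e q := fun q hq =>
    Nat.pow_pos (Nat.prime_of_mem_primeFactors hq).pos
  have hs_ne : ∀ p, s p ≠ 0 := by
    intro p
    refine Finset.prod_ne_zero_iff.2 (fun q hq => ?_)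
    exact (Nat.totient_pos.2 (hppos q (Finset.mem_of_mem_erase hq))).ne'
  have hF_ne : ∀ p ∈ pf, F p ≠ 0 := by
    intro p hp
    have hp2 := (Nat.prime_of_mem_primeFactors hp).two_le
    simp only [hF_def]
    exact Nat.mul_ne_zero (Nat.mul_ne_zero (by omega) (by omega)) (hs_ne p)
  have hy_eq : ∀ p, y p = b ^ F p := fun p => rfl
  have hw_eq : ∀ p, w p = padicValNat p (y p - 1) := fun p => rfl
  have hy2 : ∀ p ∈ pf, 2 ≤ y p := fun p hp =>
    le_trans hb (Nat.le_self_pow (hF_ne p hp) b)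
  have hcopb : ∀ p ∈ pf, Nat.Coprime b p := fun p hp =>
    hbd.coprime_dvd_right (Nat.dvd_of_mem_primeFactors hp)
  have hnotdvd : ∀ p ∈ pf, ¬ p ∣ b := by
    intro p hp hdvd
    have h1 : p ∣ Nat.gcd b p := Nat.dvd_gcd hdvd dvd_rfl
    rw [(hcopb p hp)] at h1
    have := Nat.le_of_dvd one_pos h1
    have := (Nat.prime_of_mem_primeFactors hp).two_le
    omega
  have hdvd1 : ∀ p ∈ pf, p ∣ y p - 1 := by
    intro p hp
    have hp' := Nat.prime_of_mem_primeFactors hp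
    have h1 : b ^ p.totient ≡ 1 [MOD p] := Nat.ModEq.pow_totient (hcopb p hp)
    have h2 : p.totient ∣ F p := by
      rw [Nat.totient_prime hp']
      exact ⟨2 * s p, by simp only [hF_def]; ring⟩
    have h3 : y p ≡ 1 [MOD p] := pow_modeq_one_of_dvd h1 h2
    exact (Nat.modEq_iff_dvd' (by have := hy2 p hp; omega)).1 h3.symm
  have hy1ne : ∀ p ∈ pf, y p - 1 ≠ 0 := by
    intro p hp; have := hy2 p hp; omega
  have hw1 : ∀ p ∈ pf, 1 ≤ w p := by
    intro p hp
    haveI : Fact (Nat.Prime p) := ⟨Nat.prime_of_mem_primeFactors hp⟩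
    rcases (padicValNat_dvd_iff 1 (y p - 1)).1 (by simpa using hdvd1 p hp) with h | h
    · exact absurd h (hy1ne p hp)
    · exact h
  have hvals : ∀ p ∈ pf, ∀ k : ℕ, k ≠ 0 →
      padicValNat p ((y p) ^ k - 1) = w p + padicValNat p k := by
    intro p hp k hk
    have hp' := Nat.prime_of_mem_primeFactors hp
    haveI : Fact (Nat.Prime p) := ⟨hp'⟩
    rcases hp'.eq_two_or_odd' with h2 | hodd
    · subst h2
      have hbodd : ¬ 2 ∣ b := hnotdvd 2 hp
      have hb1 : 2 ∣ b - 1 := by omega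
      have key : ∀ n : ℕ, n ≠ 0 → Even n → padicValNat 2 (b ^ n - 1) + 1 =
          padicValNat 2 (b + 1) + padicValNat 2 (b - 1) + padicValNat 2 n := by
        intro n hn hev
        have h9 := padicValNat.pow_two_sub_pow (x := b) (y := 1) (by omega)
          (by simpa using hb1) hbodd hn hev
        simpa using h9
      have hFev : Even (F 2) := ⟨(2 - 1) * s 2, by simp only [hF_def]; ring⟩
      have h1 := key (F 2) (hF_ne 2 hp) hFev
      have h2 := key (F 2 * k) (Nat.mul_ne_zero (hF_ne 2 hp) hk) (hFev.mul_right k)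
      have h3 : padicValNat 2 (F 2 * k) = padicValNat 2 (F 2) + padicValNat 2 k :=
        padicValNat.mul (hF_ne 2 hp) hk
      have h4 : (y 2) ^ k = b ^ (F 2 * k) := by
        rw [hy_eq]; exact (pow_mul b (F 2) k).symm
      rw [h4, hw_eq, hy_eq]
      omega
    · have h5 := padicValNat.pow_sub_pow (p := p) hodd (x := y p) (y := 1)
        (by have := hy2 p hp; omega) (by simpa using hdvd1 p hp)
        (fun hdvd => hnotdvd p hp (hp'.dvd_of_dvd_pow (show p ∣ b ^ F p from hdvd))) hk
      simpa using h5
  have hq_modeq : ∀ p ∈ pf, ∀ q ∈ pf, q ≠ p → y q ≡ 1 [MOD p ^ e p] := by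
    intro p hp q hq hqp
    have h1 : b ^ (p ^ e p).totient ≡ 1 [MOD p ^ e p] :=
      Nat.ModEq.pow_totient (hbd.coprime_dvd_right (Nat.ordProj_dvd d p))
    have h2 : (p ^ e p).totient ∣ F q := by
      have hmem : p ∈ pf.erase q := Finset.mem_erase.2 ⟨fun h => hqp h.symm, hp⟩
      have h3 : (p ^ e p).totient ∣ s q :=
        Finset.dvd_prod_of_mem (fun q' => (q' ^ e q').totient) hmem
      exact h3.mul_left _
    exact pow_modeq_one_of_dvd h1 h2
  refine ⟨∏ p ∈ pf, p ^ min (w p) (e p), ?_, ?_, ?_, ?_⟩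
  · exact Finset.prod_pos (fun p hp =>
      Nat.pow_pos (Nat.prime_of_mem_primeFactors hp).pos)
  · have h1 : (∏ p ∈ pf, p ^ min (w p) (e p)) ∣ ∏ p ∈ pf, p ^ e p :=
      Finset.prod_dvd_prod_of_dvd _ _ (fun p _ => pow_dvd_pow p (min_le_right _ _))
    rwa [prod_factorization_eq hd0] at h1
  · -- size bound
    set W := ∏ q ∈ pf, (q - 1) with hW
    have hW0 : W ≠ 0 := Finset.prod_ne_zero_iff.2 (fun q hq => by
      have := (Nat.prime_of_mem_primeFactors hq).two_le; omega)
    have hv2W : ∀ p ∈ pf, padicValNat p (s p) ≤ padicValNat p W := by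
      intro p hp
      have hp' := Nat.prime_of_mem_primeFactors hp
      haveI : Fact (Nat.Prime p) := ⟨hp'⟩
      have hterm : ∀ q ∈ pf.erase p,
          padicValNat p ((q ^ e q).totient) = padicValNat p (q - 1) := by
        intro q hq
        have hq' := Nat.prime_of_mem_primeFactors (Finset.mem_of_mem_erase hq)
        have hqp : q ≠ p := (Finset.mem_erase.1 hq).1
        have hq2 := hq'.two_le
        have heq : 0 < e q := hq'.factorization_pos_of_dvd hd0
          (Nat.dvd_of_mem_primeFactors (Finset.mem_of_mem_erase hq))
        rw [Nat.totient_prime_pow hq' heq]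
        have hnd : ¬ p ∣ q ^ (e q - 1) := by
          intro hdvd
          exact hqp (((Nat.prime_dvd_prime_iff_eq hp' hq').1
            (hp'.dvd_of_dvd_pow hdvd)).symm)
        rw [padicValNat.mul (pow_ne_zero _ hq'.pos.ne') (by omega),
          padicValNat.eq_zero_of_not_dvd hnd, zero_add]
      have hsv : padicValNat p (s p) = ∑ q ∈ pf.erase p, padicValNat p (q - 1) := by
        have h1 : (s p).factorization = ∑ q ∈ pf.erase p, ((q ^ e q).totient).factorization :=
          Nat.factorization_prod (fun q hq =>
            (Nat.totient_pos.2 (hppos q (Finset.mem_of_mem_erase hq))).ne')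
        calc padicValNat p (s p) = (s p).factorization p := (Nat.factorization_def _ hp').symm
          _ = ∑ q ∈ pf.erase p, ((q ^ e q).totient).factorization p := by
              rw [h1, Finsupp.finset_sum_apply]
          _ = ∑ q ∈ pf.erase p, padicValNat p ((q ^ e q).totient) :=
              Finset.sum_congr rfl (fun q _ => Nat.factorization_def _ hp')
          _ = ∑ q ∈ pf.erase p, padicValNat p (q - 1) := Finset.sum_congr rfl hterm
      have hWv : padicValNat p W = ∑ q ∈ pf, padicValNat p (q - 1) := by
        have h1 : W.factorization = ∑ q ∈ pf, (q - 1).factorization :=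
          Nat.factorization_prod (fun q hq => by
            have := (Nat.prime_of_mem_primeFactors hq).two_le; omega)
        calc padicValNat p W = W.factorization p := (Nat.factorization_def _ hp').symm
          _ = ∑ q ∈ pf, (q - 1).factorization p := by rw [h1, Finsupp.finset_sum_apply]
          _ = ∑ q ∈ pf, padicValNat p (q - 1) :=
              Finset.sum_congr rfl (fun q _ => Nat.factorization_def _ hp')
      rw [hsv, hWv]
      exact Finset.sum_le_sum_of_subset (Finset.erase_subset _ _)
    have hbound_p : ∀ p ∈ pf,
        p ^ min (w p) (e p) ≤ b ^ (2 * (p - 1)) * p ^ padicValNat p W := by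
      intro p hp
      have hp' := Nat.prime_of_mem_primeFactors hp
      haveI : Fact (Nat.Prime p) := ⟨hp'⟩
      have hle1 : p ^ min (w p) (e p) ≤ p ^ w p :=
        Nat.pow_le_pow_right hp'.pos (min_le_left _ _)
      obtain ⟨v1, hv1, hv1le⟩ :
          ∃ v1, w p = v1 + padicValNat p (s p) ∧ p ^ v1 ≤ b ^ (2 * (p - 1)) := by
        rcases hp'.eq_two_or_odd' with h2 | hodd
        · subst h2
          have hbodd : ¬ 2 ∣ b := hnotdvd 2 hp
          have hb1 : 2 ∣ b - 1 := by omega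
          have hkey := padicValNat.pow_two_sub_pow (x := b) (y := 1) (by omega)
            (by simpa using hb1) hbodd (hF_ne 2 hp)
            ⟨(2 - 1) * s 2, by simp only [hF_def]; ring⟩
          simp only [one_pow, mul_one] at hkey
          have hF2 : F 2 = 2 * s 2 := by norm_num [hF_def]
          have hvF : padicValNat 2 (F 2) = 1 + padicValNat 2 (s 2) := by
            rw [hF2, padicValNat.mul two_ne_zero (hs_ne 2), padicValNat.self one_lt_two]
          refine ⟨padicValNat 2 (b + 1) + padicValNat 2 (b - 1), ?_, ?_⟩
          · rw [hw_eq, hy_eq]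
            omega
          · calc 2 ^ (padicValNat 2 (b + 1) + padicValNat 2 (b - 1))
                = 2 ^ padicValNat 2 (b + 1) * 2 ^ padicValNat 2 (b - 1) := pow_add 2 _ _
              _ ≤ (b + 1) * (b - 1) := Nat.mul_le_mul
                  (Nat.le_of_dvd (by omega) pow_padicValNat_dvd)
                  (Nat.le_of_dvd (by omega) pow_padicValNat_dvd)
              _ ≤ b ^ (2 * (2 - 1)) := by
                  obtain ⟨c, rfl⟩ : ∃ c, b = c + 2 := ⟨b - 2, by omega⟩
                  have h9 : c + 2 - 1 = c + 1 := by omega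
                  have h10 : 2 * (2 - 1) = 2 := by norm_num
                  rw [h9, h10]
                  nlinarith [sq_nonneg c]
        · have hfermat : p ∣ b ^ (2 * (p - 1)) - 1 := by
            have h1 : b ^ p.totient ≡ 1 [MOD p] := Nat.ModEq.pow_totient (hcopb p hp)
            have h2 : b ^ (2 * (p - 1)) ≡ 1 [MOD p] := by
              refine pow_modeq_one_of_dvd h1 ?_
              rw [Nat.totient_prime hp']
              exact ⟨2, by ring⟩
            exact (Nat.modEq_iff_dvd'
              (Nat.one_le_pow _ _ (by omega))).1 h2.symm
          have hx1 : 1 < b ^ (2 * (p - 1)) := by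
            have h3 : 2 ≤ b ^ (2 * (p - 1)) :=
              le_trans hb (Nat.le_self_pow (by have := hp'.two_le; omega) b)
            omega
          have hnd : ¬ p ∣ b ^ (2 * (p - 1)) :=
            fun h => hnotdvd p hp (hp'.dvd_of_dvd_pow h)
          have hdecomp := padicValNat.pow_sub_pow (p := p) hodd
            (x := b ^ (2 * (p - 1))) (y := 1) hx1 (by simpa using hfermat) hnd (hs_ne p)
          simp only [one_pow] at hdecomp
          refine ⟨padicValNat p (b ^ (2 * (p - 1)) - 1), ?_, ?_⟩
          · rw [hw_eq]
            have hyp : y p = (b ^ (2 * (p - 1))) ^ (s p) := by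
              rw [hy_eq, ← pow_mul]
            rw [hyp, hdecomp]
          · exact le_trans (Nat.le_of_dvd (by omega) pow_padicValNat_dvd) (by omega)
      calc p ^ min (w p) (e p) ≤ p ^ w p := hle1
        _ = p ^ v1 * p ^ padicValNat p (s p) := by rw [hv1, pow_add]
        _ ≤ b ^ (2 * (p - 1)) * p ^ padicValNat p W :=
            Nat.mul_le_mul hv1le (Nat.pow_le_pow_right hp'.pos (hv2W p hp))
    calc (∏ p ∈ pf, p ^ min (w p) (e p))
        ≤ ∏ p ∈ pf, (b ^ (2 * (p - 1)) * p ^ padicValNat p W) :=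
          Finset.prod_le_prod' hbound_p
      _ = (∏ p ∈ pf, b ^ (2 * (p - 1))) * ∏ p ∈ pf, p ^ padicValNat p W :=
          Finset.prod_mul_distrib
      _ = b ^ (∑ p ∈ pf, 2 * (p - 1)) * ∏ p ∈ pf, p ^ padicValNat p W := by
          rw [Finset.prod_pow_eq_pow_sum]
      _ = b ^ (2 * ∑ p ∈ pf, (p - 1)) * ∏ p ∈ pf, p ^ padicValNat p W := by
          rw [← Finset.mul_sum]
      _ ≤ b ^ (2 * ∑ p ∈ pf, (p - 1)) * W := Nat.mul_le_mul_left _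
          (Nat.le_of_dvd (by omega)
            (prod_pow_padic_dvd (fun p hp => Nat.prime_of_mem_primeFactors hp) hW0))
      _ ≤ b ^ (2 * ∑ p ∈ pf, (p - 1)) * ∏ q ∈ pf, q := Nat.mul_le_mul_left _
          (Finset.prod_le_prod' (fun q hq => by omega))
  · -- surjectivity
    intro z hz
    have hstep : ∀ p, ∃ k, (p ∈ pf → (y p) ^ k ≡ z [MOD p ^ e p]) := by
      intro p
      by_cases hp : p ∈ pf
      · have hz_p : z ≡ 1 [MOD p ^ min (w p) (e p)] :=
          hz.of_dvd (Finset.dvd_prod_of_mem (fun p => p ^ min (w p) (e p)) hp)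
        obtain ⟨k, hk⟩ := keyP (Nat.prime_of_mem_primeFactors hp) (hy2 p hp)
          (hw1 p hp) (hvals p hp) (e p) hz_p
        exact ⟨k, fun _ => hk⟩
      · exact ⟨0, fun h => absurd h hp⟩
    choose K hK using hstep
    refine ⟨∑ p ∈ pf, F p * K p, ?_⟩
    have hpowprod : b ^ (∑ p ∈ pf, F p * K p) = ∏ p ∈ pf, (y p) ^ K p := by
      rw [← Finset.prod_pow_eq_pow_sum]
      exact Finset.prod_congr rfl (fun p _ => by rw [hy_eq, ← pow_mul])
    refine crt_glue hd0 (fun p hp => ?_)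
    rw [hpowprod, ← Finset.mul_prod_erase _ _ hp]
    have hR : (∏ q ∈ pf.erase p, (y q) ^ K q) ≡ 1 [MOD p ^ e p] :=
      prod_modeq_one (fun q hq => by
        have h1 := hq_modeq p hp q (Finset.mem_of_mem_erase hq) (Finset.mem_erase.1 hq).1
        simpa using h1.pow (K q))
    have h2 := (hK p hp).mul hR
    simpa using h2



lemma orbit_mem {b a d : ℕ} (hd : 0 < d) (ha : a < d) {A : Set ℝ}
    (hT : ∀ x ∈ A, (∃ q : ℚ, (q : ℝ) = x) → Tb b x ∈ A)
    (hmem : (a : ℝ) / d ∈ A) :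
    ∀ k : ℕ, ((a * b ^ k % d : ℕ) : ℝ) / d ∈ A := by
  intro k
  induction k with
  | zero => simpa [Nat.mod_eq_of_lt ha] using hmem
  | succ k ih =>
    have hrat : ∃ q : ℚ, (q : ℝ) = ((a * b ^ k % d : ℕ) : ℝ) / d :=
      ⟨(a * b ^ k % d : ℕ) / (d : ℚ), by push_cast; ring⟩
    have h2 := hT _ ih hrat
    have h3 : Tb b (((a * b ^ k % d : ℕ) : ℝ) / d) = ((a * b ^ (k + 1) % d : ℕ) : ℝ) / d := by
      unfold Tb
      rw [show (b : ℝ) * (((a * b ^ k % d : ℕ) : ℝ) / d) = ((b * (a * b ^ k % d) : ℕ) : ℝ) / d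
        by push_cast; ring]
      rw [Int.fract_div_natCast_eq_div_natCast_mod]
      congr 2
      show b * (a * b ^ k % d) % d = a * b ^ (k + 1) % d
      have h0 : b * (a * b ^ k % d) ≡ b * (a * b ^ k) [MOD d] := (Nat.mod_modEq _ _).mul_left b
      have heq : b * (a * b ^ k) = a * b ^ (k + 1) := by ring
      exact heq ▸ h0
    rw [h3] at h2
    exact h2

lemma ap_dense {a m d : ℕ} (hm : 0 < m) (hmd : m ∣ d) (hd : 0 < d) (ha : a < d)
    {x : ℝ} (hx0 : 0 ≤ x) (hx1 : x < 1) :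
    ∃ r : ℕ, r < d ∧ r ≡ a [MOD m] ∧ |x * d - r| ≤ m := by
  have hmd' : m ≤ d := Nat.le_of_dvd hd hmd
  have hxd0 : 0 ≤ x * d := by positivity
  set n₀ := ⌊x * d⌋₊ with hn0
  have hfl : (n₀ : ℝ) ≤ x * d := Nat.floor_le hxd0
  have hfu : x * d < n₀ + 1 := Nat.lt_floor_add_one _
  have hd0R : (0 : ℝ) < d := by exact_mod_cast hd
  have hn0d : n₀ < d := by
    by_contra hcon
    push_neg at hcon
    have h1 : (d : ℝ) ≤ n₀ := by exact_mod_cast hcon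
    nlinarith
  have hamm : a % m < m := Nat.mod_lt a hm
  rcases lt_or_ge n₀ (a % m) with hcase | hcase
  · refine ⟨a % m, lt_of_lt_of_le hamm hmd', Nat.mod_modEq a m, ?_⟩
    have h1 : (n₀ : ℝ) + 1 ≤ (a % m : ℕ) := by exact_mod_cast Nat.succ_le_of_lt hcase
    have h2 : ((a % m : ℕ) : ℝ) < m := by exact_mod_cast hamm
    rw [abs_le]
    constructor <;> linarith
  · set t := n₀ - a % m with ht
    refine ⟨a % m + m * (t / m), ?_, ?_, ?_⟩
    · have h1 : m * (t / m) ≤ t := Nat.mul_div_le t m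
      omega
    · show (a % m + m * (t / m)) % m = a % m
      rw [Nat.add_mul_mod_self_left, Nat.mod_mod_of_dvd a dvd_rfl]
    · have h1 := Nat.mod_add_div t m
      have h2 := Nat.mod_lt t hm
      have hrle : a % m + m * (t / m) ≤ n₀ := by omega
      have hgap : n₀ < a % m + m * (t / m) + m := by omega
      have h3 : ((a % m + m * (t / m) : ℕ) : ℝ) ≤ n₀ := by exact_mod_cast hrle
      have h4 : (n₀ : ℝ) + 1 ≤ ((a % m + m * (t / m) : ℕ) : ℝ) + m := by
        have : (n₀ : ℕ) + 1 ≤ (a % m + m * (t / m)) + m := by omega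
        exact_mod_cast this
      rw [abs_le]
      constructor <;> linarith


lemma cheb (P : ℕ) (hP : 2 ≤ P) :
    (∑ p ∈ (Finset.range (P + 1)).filter Nat.Prime, (p : ℝ)) * Real.log P ≤ 4 * P ^ 2 := by
  classical
  set S := (Finset.range (P + 1)).filter Nat.Prime with hS
  set sq := Nat.sqrt P with hsq
  have hPR : (2 : ℝ) ≤ P := by exact_mod_cast hP
  have hlogP0 : 0 ≤ Real.log P := Real.log_nonneg (by linarith)
  have hlogP_le : Real.log P ≤ P := (Real.log_le_sub_one_of_pos (by linarith)).trans (by linarith)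
  -- split
  set S1 := S.filter (fun p => p ≤ sq) with hS1
  set S2 := S.filter (fun p => ¬ p ≤ sq) with hS2
  have hsplit : (∑ p ∈ S1, (p : ℝ)) + (∑ p ∈ S2, (p : ℝ)) = ∑ p ∈ S, (p : ℝ) :=
    Finset.sum_filter_add_sum_filter_not S _ _
  -- bound for S1
  have hsum1 : (∑ p ∈ S1, (p : ℝ)) ≤ (P : ℝ) := by
    have h1 : ∀ p ∈ S1, (p : ℝ) ≤ (sq : ℝ) := by
      intro p hp
      have := (Finset.mem_filter.1 hp).2
      exact_mod_cast this
    have h2 := Finset.sum_le_card_nsmul S1 _ _ h1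
    have h3 : S1 ⊆ Finset.Icc 2 sq := by
      intro p hp
      rw [Finset.mem_Icc]
      have hm := Finset.mem_filter.1 hp
      exact ⟨((Finset.mem_filter.1 hm.1).2).two_le, hm.2⟩
    have h4 : S1.card ≤ sq := by
      have := Finset.card_le_card h3
      rw [Nat.card_Icc] at this
      omega
    have h5 : (S1.card : ℝ) * (sq : ℝ) ≤ (sq : ℝ) * sq := by
      have hsq0 : (0 : ℝ) ≤ sq := by positivity
      have : (S1.card : ℝ) ≤ sq := by exact_mod_cast h4
      nlinarith
    have h6 : (sq : ℝ) * sq ≤ P := by exact_mod_cast Nat.sqrt_le P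
    calc (∑ p ∈ S1, (p : ℝ)) ≤ S1.card • (sq : ℝ) := h2
      _ = (S1.card : ℝ) * sq := nsmul_eq_mul _ _
      _ ≤ (sq : ℝ) * sq := h5
      _ ≤ P := h6
  -- bound for S2
  have hcard2 : (S2.card : ℝ) * Real.log (sq + 1) ≤ (P : ℝ) * Real.log 4 := by
    have h1 : (sq + 1) ^ S2.card ≤ ∏ p ∈ S2, p := by
      refine Finset.pow_card_le_prod _ _ _ ?_
      intro p hp
      have := (Finset.mem_filter.1 hp).2
      omega
    have h2 : (∏ p ∈ S2, p) ≤ primorial P := by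
      refine Finset.prod_le_prod_of_subset_of_one_le' (Finset.filter_subset _ _) ?_
      intro p hp _
      exact ((Finset.mem_filter.1 hp).2).pos
    have h3 : ((sq : ℝ) + 1) ^ S2.card ≤ (4 : ℝ) ^ P := by
      have : ((sq + 1 : ℕ) : ℝ) ^ S2.card ≤ ((4 ^ P : ℕ) : ℝ) := by
        exact_mod_cast (h1.trans (h2.trans (primorial_le_4_pow P)))
      simpa using this
    have h4 := Real.log_le_log (by positivity) h3
    rw [Real.log_pow, Real.log_pow] at h4
    simpa using h4
  have hlogsq : Real.log P ≤ 2 * Real.log ((sq : ℝ) + 1) := by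
    have h1 : (P : ℝ) ≤ ((sq : ℝ) + 1) ^ 2 := by
      have := Nat.lt_succ_sqrt P
      have h2 : (P : ℝ) < ((sq + 1 : ℕ) : ℝ) * ((sq + 1 : ℕ) : ℝ) := by exact_mod_cast this
      push_cast at h2
      nlinarith
    calc Real.log P ≤ Real.log (((sq : ℝ) + 1) ^ 2) := Real.log_le_log (by linarith) h1
      _ = 2 * Real.log ((sq : ℝ) + 1) := by rw [Real.log_pow]; norm_num
  have hsum2 : (∑ p ∈ S2, (p : ℝ)) ≤ (S2.card : ℝ) * P := by
    have h1 : ∀ p ∈ S2, (p : ℝ) ≤ (P : ℝ) := by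
      intro p hp
      have hm := Finset.mem_filter.1 ((Finset.mem_filter.1 hp).1)
      have := Finset.mem_range.1 hm.1
      exact_mod_cast (by omega : p ≤ P)
    calc (∑ p ∈ S2, (p : ℝ)) ≤ S2.card • (P : ℝ) := Finset.sum_le_card_nsmul _ _ _ h1
      _ = (S2.card : ℝ) * P := nsmul_eq_mul _ _
  have hlog4 : Real.log 4 ≤ 1.4 := by
    have h1 : (4 : ℝ) = 2 ^ 2 := by norm_num
    rw [h1, Real.log_pow]
    have := Real.log_two_lt_d9
    push_cast
    linarith
  have hlogsq0 : 0 ≤ Real.log ((sq : ℝ) + 1) := Real.log_nonneg (le_add_of_nonneg_left (by positivity))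
  have hcard2' : 0 ≤ (S2.card : ℝ) := by positivity
  -- combine
  have hS2part : (∑ p ∈ S2, (p : ℝ)) * Real.log P ≤ 2.8 * P ^ 2 := by
    calc (∑ p ∈ S2, (p : ℝ)) * Real.log P
        ≤ ((S2.card : ℝ) * P) * Real.log P := by
          apply mul_le_mul_of_nonneg_right hsum2 hlogP0
      _ ≤ ((S2.card : ℝ) * P) * (2 * Real.log ((sq : ℝ) + 1)) := by
          apply mul_le_mul_of_nonneg_left hlogsq
          positivity
      _ = 2 * (P : ℝ) * ((S2.card : ℝ) * Real.log ((sq : ℝ) + 1)) := by ring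
      _ ≤ 2 * (P : ℝ) * ((P : ℝ) * Real.log 4) := by
          apply mul_le_mul_of_nonneg_left hcard2
          positivity
      _ ≤ 2 * (P : ℝ) * ((P : ℝ) * 1.4) := by
          apply mul_le_mul_of_nonneg_left ?_ (by positivity)
          apply mul_le_mul_of_nonneg_left hlog4 (by positivity)
      _ = 2.8 * P ^ 2 := by ring
  have hS1part : (∑ p ∈ S1, (p : ℝ)) * Real.log P ≤ (P : ℝ) ^ 2 := by
    have hsum10 : 0 ≤ ∑ p ∈ S1, (p : ℝ) := Finset.sum_nonneg (fun p _ => by positivity)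
    calc (∑ p ∈ S1, (p : ℝ)) * Real.log P ≤ (P : ℝ) * Real.log P :=
          mul_le_mul_of_nonneg_right hsum1 hlogP0
      _ ≤ (P : ℝ) * P := mul_le_mul_of_nonneg_left hlogP_le (by positivity)
      _ = (P : ℝ) ^ 2 := by ring
  have : (∑ p ∈ S, (p : ℝ)) * Real.log P
      = (∑ p ∈ S1, (p : ℝ)) * Real.log P + (∑ p ∈ S2, (p : ℝ)) * Real.log P := by
    rw [← hsplit]; ring
  rw [this]
  nlinarith [hS1part, hS2part, sq_nonneg (P : ℝ)]


theorem stmt16 : ∃ c : ℝ, c > 0 ∧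
    ∀ (b : ℕ), 2 ≤ b → ∀ (A : Set ℝ), A ⊆ Set.Ico 0 1 →
    (∀ x ∈ A, (∃ q : ℚ, (q : ℝ) = x) → Tb b x ∈ A) →
    ¬ Set.Icc (0 : ℝ) 1 ⊆ closure A →
    ∀ ε : ℝ, ε = sSup ((fun x => Metric.infDist x A) '' Set.Ico 0 1) →
    ∀ a d : ℕ, 2 ≤ d → Nat.Coprime (a * b) d → (a : ℝ) / d ∈ A →
    Real.log (2 * ε * d) ≤ c * ((Pd d : ℝ) ^ 2 / Real.log (Pd d)) * Real.log b := by
  refine ⟨11, by norm_num, ?_⟩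
  intro b hb A hA hT hnd ε hε a d hd hcop hmemA
  have hd0 : 0 < d := by omega
  have hd0R : (0 : ℝ) < d := by exact_mod_cast hd0
  have hb1R : (1 : ℝ) < b := by exact_mod_cast (by omega : 1 < b)
  have hlogb0 : 0 ≤ Real.log b := Real.log_nonneg (by linarith)
  have hcopa : Nat.Coprime a d := Nat.Coprime.coprime_dvd_left (dvd_mul_right a b) hcop
  have hcopb : Nat.Coprime b d := Nat.Coprime.coprime_dvd_left (dvd_mul_left b a) hcop
  have ha_lt : a < d := by
    have h1 := hA hmemA
    have h2 : (a : ℝ) / d < 1 := h1.2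
    have h3 : (a : ℝ) < d := (div_lt_one hd0R).1 h2
    exact_mod_cast h3
  set P := Pd d with hPdef
  have hple : ∀ p ∈ d.primeFactors, p ≤ P := fun p hp => Finset.le_sup (f := id) hp
  have hP2 : 2 ≤ P := by
    obtain ⟨q, hq, hqd⟩ := Nat.exists_prime_and_dvd (by omega : d ≠ 1)
    have hqm : q ∈ d.primeFactors := Nat.mem_primeFactors.2 ⟨hq, hqd, by omega⟩
    exact le_trans hq.two_le (hple q hqm)
  have hPR : (2 : ℝ) ≤ P := by exact_mod_cast hP2
  have hlogP_pos : 0 < Real.log P := Real.log_pos (by linarith)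
  have hlogP_le : Real.log P ≤ P :=
    (Real.log_le_sub_one_of_pos (by linarith)).trans (by linarith)
  obtain ⟨m, hm0, hmd, hm_le, hsurj⟩ := mainNT hb hd hcopb
  set σ := ∑ p ∈ d.primeFactors, (p - 1) with hσ
  have hsub : d.primeFactors ⊆ (Finset.range (P + 1)).filter Nat.Prime := by
    intro p hp
    exact Finset.mem_filter.2 ⟨Finset.mem_range.2 (by have := hple p hp; omega),
      Nat.prime_of_mem_primeFactors hp⟩
  -- membership of the AP points
  have hAP : ∀ r : ℕ, r < d → r ≡ a [MOD m] → ((r : ℝ) / d) ∈ A := by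
    intro r hrd hrm
    obtain ⟨ai, -, hai⟩ := Nat.exists_mul_mod_eq_one_of_coprime hcopa (by omega)
    have hai' : a * ai ≡ 1 [MOD d] := by
      show a * ai % d = 1 % d
      rw [hai, Nat.mod_eq_of_lt (by omega)]
    have hz_d : a * (ai * r) ≡ r [MOD d] := by
      have h1 : a * ai * r ≡ 1 * r [MOD d] := hai'.mul_right r
      calc a * (ai * r) = a * ai * r := by ring
        _ ≡ 1 * r [MOD d] := h1
        _ = r := one_mul r
    have hcopam : Nat.Coprime a m := hcopa.coprime_dvd_right hmd
    have hz_m : ai * r ≡ 1 [MOD m] := by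
      have h1 : a * (ai * r) ≡ r [MOD m] := hz_d.of_dvd hmd
      have h2 : a * (ai * r) ≡ a * 1 [MOD m] := by
        rw [mul_one]
        exact h1.trans hrm
      exact Nat.ModEq.cancel_left_of_coprime hcopam.symm.gcd_eq_one h2
    obtain ⟨k, hk⟩ := hsurj (ai * r) hz_m
    have hk2 : a * b ^ k ≡ r [MOD d] := (hk.mul_left a).trans hz_d
    have hk3 : a * b ^ k % d = r := by
      have h4 := hk2
      unfold Nat.ModEq at h4
      rwa [Nat.mod_eq_of_lt hrd] at h4
    have h5 := orbit_mem hd0 ha_lt hT hmemA k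
    rwa [hk3] at h5
  -- density
  have hdense : ∀ x ∈ Set.Ico (0 : ℝ) 1, Metric.infDist x A ≤ (m : ℝ) / d := by
    intro x hx
    obtain ⟨r, hrd, hrm, hrdist⟩ := ap_dense hm0 hmd hd0 ha_lt hx.1 hx.2
    have hmemr := hAP r hrd hrm
    have h1 : Metric.infDist x A ≤ dist x ((r : ℝ) / d) :=
      Metric.infDist_le_dist_of_mem hmemr
    have h2 : dist x ((r : ℝ) / d) = |x * d - r| / d := by
      rw [Real.dist_eq, show x - (r : ℝ) / d = (x * d - r) / d by field_simp,
        abs_div, abs_of_pos hd0R]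
    rw [h2] at h1
    refine h1.trans ?_
    gcongr
  have himg_ne : ((fun x => Metric.infDist x A) '' Set.Ico 0 1).Nonempty :=
    ⟨_, Set.mem_image_of_mem _ (Set.mem_Ico.2 ⟨le_refl (0 : ℝ), zero_lt_one⟩)⟩
  have hε_le : ε ≤ (m : ℝ) / d := by
    rw [hε]
    refine csSup_le himg_ne ?_
    rintro v ⟨x, hx, rfl⟩
    exact hdense x hx
  have hε0 : 0 ≤ ε := by
    rw [hε]
    have hbdd : BddAbove ((fun x => Metric.infDist x A) '' Set.Ico 0 1) := by
      refine ⟨(m : ℝ) / d, ?_⟩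
      rintro v ⟨x, hx, rfl⟩
      exact hdense x hx
    exact le_csSup_of_le hbdd
      (Set.mem_image_of_mem _ (Set.mem_Ico.2 ⟨le_refl (0 : ℝ), zero_lt_one⟩))
      Metric.infDist_nonneg
  -- arithmetic bound
  have hEbound : 2 * m ≤ b ^ (1 + 2 * σ + 2 * P) := by
    have h4 : (∏ p ∈ d.primeFactors, p) ≤ b ^ (2 * P) := by
      have h5 : (∏ p ∈ d.primeFactors, p) ≤ primorial P :=
        Finset.prod_le_prod_of_subset_of_one_le' hsub
          (fun p hp _ => ((Finset.mem_filter.1 hp).2).pos)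
      have h6 : primorial P ≤ 4 ^ P := primorial_le_4_pow P
      have h7 : (4 : ℕ) ^ P = 2 ^ (2 * P) := by
        rw [show (4 : ℕ) = 2 ^ 2 by norm_num, ← pow_mul]
      have h8 : (2 : ℕ) ^ (2 * P) ≤ b ^ (2 * P) := Nat.pow_le_pow_left hb _
      omega
    calc 2 * m ≤ 2 * (b ^ (2 * σ) * ∏ p ∈ d.primeFactors, p) :=
          Nat.mul_le_mul_left 2 hm_le
      _ ≤ b * (b ^ (2 * σ) * b ^ (2 * P)) :=
          Nat.mul_le_mul hb (Nat.mul_le_mul_left _ h4)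
      _ = b ^ (1 + 2 * σ + 2 * P) := by rw [pow_add, pow_add, pow_one]; ring
  set E := 1 + 2 * σ + 2 * P with hE
  have hlog1 : Real.log (2 * ε * d) ≤ (E : ℝ) * Real.log b := by
    have h2m : (1 : ℝ) ≤ 2 * (m : ℝ) := by
      have h1 : (1 : ℝ) ≤ (m : ℝ) := by exact_mod_cast hm0
      linarith
    have hεd : 2 * ε * d ≤ 2 * (m : ℝ) := by
      have h1 : ε * d ≤ (m : ℝ) / d * d := mul_le_mul_of_nonneg_right hε_le (le_of_lt hd0R)
      rw [div_mul_cancel₀ _ (ne_of_gt hd0R)] at h1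
      linarith
    have hbE : 2 * (m : ℝ) ≤ (b : ℝ) ^ E := by
      have h9 : ((2 * m : ℕ) : ℝ) ≤ ((b ^ E : ℕ) : ℝ) := by exact_mod_cast hEbound
      push_cast at h9
      linarith
    have hstep : Real.log (2 * ε * d) ≤ Real.log ((b : ℝ) ^ E) := by
      rcases eq_or_lt_of_le (show (0 : ℝ) ≤ 2 * ε * d by positivity) with h0 | h0
      · rw [← h0, Real.log_zero]
        exact Real.log_nonneg (le_trans h2m hbE)
      · exact Real.log_le_log h0 (le_trans hεd hbE)
    rwa [Real.log_pow] at hstep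
  have hσle : ((σ : ℕ) : ℝ) ≤ ∑ p ∈ (Finset.range (P + 1)).filter Nat.Prime, (p : ℝ) := by
    have h1 : σ ≤ ∑ p ∈ (Finset.range (P + 1)).filter Nat.Prime, p := by
      calc σ ≤ ∑ p ∈ d.primeFactors, p := Finset.sum_le_sum (fun p _ => by omega)
        _ ≤ ∑ p ∈ (Finset.range (P + 1)).filter Nat.Prime, p :=
            Finset.sum_le_sum_of_subset hsub
    calc ((σ : ℕ) : ℝ) ≤ ((∑ p ∈ (Finset.range (P + 1)).filter Nat.Prime, p : ℕ) : ℝ) := by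
          exact_mod_cast h1
      _ = ∑ p ∈ (Finset.range (P + 1)).filter Nat.Prime, (p : ℝ) := by push_cast; rfl
  have hcheb := cheb P hP2
  have hσlogP : (σ : ℝ) * Real.log P ≤ 4 * (P : ℝ) ^ 2 :=
    le_trans (mul_le_mul_of_nonneg_right hσle (le_of_lt hlogP_pos)) hcheb
  have hσ0 : (0 : ℝ) ≤ (σ : ℝ) := by positivity
  have hPlogP : (P : ℝ) * Real.log P ≤ (P : ℝ) * P :=
    mul_le_mul_of_nonneg_left hlogP_le (by linarith)
  have hPP : (P : ℝ) ≤ (P : ℝ) ^ 2 := by nlinarith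
  have hE11 : (E : ℝ) ≤ 11 * (P : ℝ) ^ 2 / Real.log P := by
    rw [le_div_iff₀ hlogP_pos]
    have hEcast : (E : ℝ) = 1 + 2 * (σ : ℝ) + 2 * (P : ℝ) := by rw [hE]; push_cast; ring
    rw [hEcast]
    nlinarith [hσlogP, hPlogP, hlogP_le, hPP, hlogP_pos.le]
  calc Real.log (2 * ε * d) ≤ (E : ℝ) * Real.log b := hlog1
    _ ≤ (11 * (P : ℝ) ^ 2 / Real.log P) * Real.log b :=
        mul_le_mul_of_nonneg_right hE11 hlogb0
    _ = 11 * ((P : ℝ) ^ 2 / Real.log P) * Real.log b := by ring
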